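/- (Scalar FPI, closed form for distinct roots) Let a > 0, g > 0, h > h_M := −(1−a)²/g, with roots x_m < x_M of g·x² + (1 − a² − g·h)·x − h = 0 and t̂ := a²/(1+g·x_M)², so 0 < t̂ < 1. Let x_0 > x_M and define x_{k+1} := a²·x_k/(1 + g·x_k) + h. Then each x_k is well-defined (1 + g·x_k > 0) and for all k ≥ 0, x_k = x_M + (x_M − x_m)/(s·t̂^{−k} − 1), where s := (x_0 − x_m)/(x_0 − x_M). -/

import Mathlib

set_option maxHeartbeats 1000000 in
/-- Scalar fixed-point iteration, closed form in the case of two distinct roots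
(`h > h_M`, starting point `x₀ > x_M`):
`x_k = x_M + (x_M - x_m) / (s t̂^{-k} - 1)` with `s = (x₀ - x_m)/(x₀ - x_M)`,
and `0 < t̂ < 1`. -/
theorem scalar_fpi_closed_form_distinct_roots (a g h : ℝ) (ha : 0 < a) (hg : 0 < g)
    (hh : h > -(1 - a) ^ 2 / g)
    (x : ℕ → ℝ) (hrec : ∀ k : ℕ, x (k + 1) = a ^ 2 * x k / (1 + g * x k) + h) :
    let D : ℝ := (1 - a ^ 2 - g * h) ^ 2 + 4 * g * h
    let xM : ℝ := (-(1 - a ^ 2 - g * h) + Real.sqrt D) / (2 * g)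
    let xm : ℝ := (-(1 - a ^ 2 - g * h) - Real.sqrt D) / (2 * g)
    let t : ℝ := a ^ 2 / (1 + g * xM) ^ 2
    let s : ℝ := (x 0 - xm) / (x 0 - xM)
    x 0 > xM →
      0 < t ∧ t < 1 ∧
      ∀ k : ℕ, 0 < 1 + g * x k ∧
        x k = xM + (xM - xm) / (s * t ^ (-(k : ℤ)) - 1) := by
  intro D xM xm t s hx0
  have hgne : g ≠ 0 := hg.ne'
  have hgh : -(1 - a) ^ 2 < g * h := by
    have := (div_lt_iff₀ hg).mp hh
    nlinarith
  have h1 : 0 < g * h + (1 - a) ^ 2 := by linarith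
  have h2 : 0 < g * h + (1 + a) ^ 2 := by nlinarith
  have hD_pos : 0 < D := by
    show (0:ℝ) < (1 - a ^ 2 - g * h) ^ 2 + 4 * g * h
    nlinarith [mul_pos h1 h2]
  have hr2 : Real.sqrt D ^ 2 = (1 - a ^ 2 - g * h) ^ 2 + 4 * g * h := Real.sq_sqrt hD_pos.le
  have hr_pos : 0 < Real.sqrt D := Real.sqrt_pos.mpr hD_pos
  have hxM : 2 * g * xM = -(1 - a ^ 2 - g * h) + Real.sqrt D := by
    show 2 * g * ((-(1 - a ^ 2 - g * h) + Real.sqrt D) / (2 * g)) = _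
    field_simp
  have hxm : 2 * g * xm = -(1 - a ^ 2 - g * h) - Real.sqrt D := by
    show 2 * g * ((-(1 - a ^ 2 - g * h) - Real.sqrt D) / (2 * g)) = _
    field_simp
  have hsum : g * xM + g * xm = a ^ 2 + g * h - 1 := by linear_combination (hxM + hxm) / 2
  have e : (2 * g * xM) * (2 * g * xm)
      = (-(1 - a ^ 2 - g * h) + Real.sqrt D) * (-(1 - a ^ 2 - g * h) - Real.sqrt D) := by
    rw [hxM, hxm]
  have hprod : (g * xM) * (g * xm) = -(g * h) := by linear_combination e / 4 - hr2 / 4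
  have hprod2 : g * xM * xm = -h := by
    apply mul_left_cancel₀ hgne
    linear_combination hprod
  have hdiff : g * xM - g * xm = Real.sqrt D := by linear_combination (hxM - hxm) / 2
  have hxmlt : xm < xM := by nlinarith
  have P : (1 + g * xM) * (1 + g * xm) = a ^ 2 := by linear_combination hsum + hprod
  have hM : 0 < 1 + g * xM := by nlinarith
  have hm : 0 < 1 + g * xm := by nlinarith [pow_pos ha 2]
  have ht_eq : t = (1 + g * xm) / (1 + g * xM) := by
    show a ^ 2 / (1 + g * xM) ^ 2 = _
    rw [← P]
    field_simp
  have ht0 : 0 < t := by rw [ht_eq]; positivity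
  have ht1 : t < 1 := by
    rw [ht_eq, div_lt_one hM]
    nlinarith
  have htne : t ≠ 0 := ht0.ne'
  have hs_def : s = (x 0 - xm) / (x 0 - xM) := rfl
  clear_value D xM xm t s
  have stepM : ∀ y : ℝ, 0 < 1 + g * y →
      a ^ 2 * y / (1 + g * y) + h - xM = (1 + g * xm) * (y - xM) / (1 + g * y) := by
    intro y hy
    have hy' : 1 + y * g ≠ 0 := by nlinarith
    field_simp
    linear_combination (-y) * hsum + hprod2
  have stepm : ∀ y : ℝ, 0 < 1 + g * y →
      a ^ 2 * y / (1 + g * y) + h - xm = (1 + g * xM) * (y - xm) / (1 + g * y) := by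
    intro y hy
    have hy' : 1 + y * g ≠ 0 := by nlinarith
    field_simp
    linear_combination (-y) * hsum + hprod2
  clear hxM hxm e hdiff hr2 hr_pos hD_pos hh h1 h2 hgh hprod
  have key : ∀ k : ℕ, xM < x k ∧ x k - xm = s * t ^ (-(k : ℤ)) * (x k - xM) := by
    intro k
    induction k with
    | zero =>
      refine ⟨hx0, ?_⟩
      have hne : x 0 - xM ≠ 0 := sub_ne_zero.mpr (ne_of_gt hx0)
      rw [hs_def]
      field_simp
      simp
    | succ k ih =>
      obtain ⟨hk1, hk2⟩ := ih
      have hyk : 0 < 1 + g * x k := by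
        have := mul_lt_mul_of_pos_left hk1 hg
        linarith
      have hx' : x (k + 1) - xM = (1 + g * xm) * (x k - xM) / (1 + g * x k) := by
        rw [hrec k]; exact stepM (x k) hyk
      have hx'm : x (k + 1) - xm = (1 + g * xM) * (x k - xm) / (1 + g * x k) := by
        rw [hrec k]; exact stepm (x k) hyk
      have hxM' : xM < x (k + 1) := by
        have : 0 < (1 + g * xm) * (x k - xM) / (1 + g * x k) :=
          div_pos (mul_pos hm (sub_pos.mpr hk1)) hyk
        linarith [hx']
      refine ⟨hxM', ?_⟩
      set T : ℝ := t ^ (-(k : ℤ)) with hT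
      have hTne : T ≠ 0 := zpow_ne_zero _ htne
      have hz : t ^ (-((k + 1 : ℕ) : ℤ)) = T / t := by
        rw [hT]
        push_cast
        rw [show -((k : ℤ) + 1) = -(k : ℤ) + (-1) by ring, zpow_add₀ htne, zpow_neg_one]
        ring
      have hq : (1 + g * xm) / t = 1 + g * xM := by
        have hmne : (1 + g * xm) ≠ 0 := hm.ne'
        have hMne : (1 + g * xM) ≠ 0 := hM.ne'
        rw [ht_eq]
        field_simp
      calc x (k + 1) - xm = (1 + g * xM) * (x k - xm) / (1 + g * x k) := hx'm
        _ = s * T / t * ((1 + g * xm) * (x k - xM) / (1 + g * x k)) := by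
            linear_combination ((1 + g * xM) / (1 + g * x k)) * hk2
              - (s * T * (x k - xM) / (1 + g * x k)) * hq
        _ = s * t ^ (-((k + 1 : ℕ) : ℤ)) * (x (k + 1) - xM) := by
            rw [hz, hx']
            ring
  refine ⟨ht0, ht1, fun k => ?_⟩
  obtain ⟨hlt, heq⟩ := key k
  have hpos : 0 < 1 + g * x k := by
    have := mul_lt_mul_of_pos_left hlt hg
    linarith
  refine ⟨hpos, ?_⟩
  have hR1 : 1 < s * t ^ (-(k : ℤ)) := by nlinarith [sub_pos.mpr hlt, heq]
  have hRne : s * t ^ (-(k : ℤ)) - 1 ≠ 0 := by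
    intro hc
    rw [sub_eq_zero] at hc
    exact absurd hc (ne_of_gt hR1)
  have h3 : (xM - xm) / (s * t ^ (-(k : ℤ)) - 1) = x k - xM := by
    rw [div_eq_iff hRne]
    linear_combination heq
  linarith [h3]
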